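/- Let i be an irrational real number with 0 < i < 1, let M = ([0, 5 + i/2] ∩ ℚ) ∪ (5 + i/2, ∞) regarded as an additive submonoid of the nonnegative reals, let F be a field, let R = F[X; M] be the monoid ring, let m be its maximal ideal of elements with zero constant term, and let D = R_m. Then the maximal ideal mR_m of D is not finitely generated; in particular D does not satisfy the MIP condition. -/

import Mathlib

open scoped Classical

/-- The "constant term" homomorphism of a monoid algebra `F[X; M]`, for a monoid `M` in
which `a + b = 0` forces `a = b = 0`; it sends `a₁X^{α₁} + ⋯ + aₙX^{αₙ}` to its
coefficient at the identity `0` of `M` (see `constantTermHom_apply`). -/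
noncomputable def constantTermHom (F M : Type*) [Field F] [AddCommMonoid M]
    (hM : ∀ a b : M, a + b = 0 → a = 0 ∧ b = 0) : AddMonoidAlgebra F M →ₐ[F] F :=
  AddMonoidAlgebra.lift F F M
    { toFun := fun a => if a.toAdd = 0 then 1 else 0
      map_one' := by simp
      map_mul' := fun a b => by
        rcases em (a.toAdd = 0) with ha | ha
        · rcases em (b.toAdd = 0) with hb | hb
          · simp [ha, hb]
          · have h : a.toAdd + b.toAdd ≠ 0 := fun h => hb (hM _ _ h).2
            simp [ha, hb, toAdd_mul, h]
        · have h : a.toAdd + b.toAdd ≠ 0 := fun h => ha (hM _ _ h).1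
          simp [ha, toAdd_mul, h] }

theorem constantTermHom_apply (F M : Type*) [Field F] [AddCommMonoid M]
    (hM : ∀ a b : M, a + b = 0 → a = 0 ∧ b = 0) (f : AddMonoidAlgebra F M) :
    constantTermHom F M hM f = f.coeff 0 := by
  classical
  rw [constantTermHom, AddMonoidAlgebra.lift_apply]
  simp only [MonoidHom.coe_mk, OneHom.coe_mk, toAdd_ofAdd, smul_eq_mul, mul_ite, mul_one,
    mul_zero]
  rw [Finsupp.sum_ite_eq' f.coeff 0 (fun _ b => b)]
  split
  · rfl
  · next h => exact (Finsupp.notMem_support_iff.mp h).symm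

/-- The augmentation ideal of the monoid algebra `F[X; M]`, consisting of all elements
with zero constant term (zero coefficient at the identity of `M`). -/
noncomputable def augIdeal (F M : Type*) [Field F] [AddCommMonoid M]
    (hM : ∀ a b : M, a + b = 0 → a = 0 ∧ b = 0) : Ideal (AddMonoidAlgebra F M) :=
  RingHom.ker (constantTermHom F M hM)

theorem mem_augIdeal_iff (F M : Type*) [Field F] [AddCommMonoid M]
    (hM : ∀ a b : M, a + b = 0 → a = 0 ∧ b = 0) (f : AddMonoidAlgebra F M) :
    f ∈ augIdeal F M hM ↔ f.coeff 0 = 0 := by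
  rw [augIdeal, RingHom.mem_ker, constantTermHom_apply]

/-- The augmentation ideal is a maximal ideal. -/
instance augIdeal_isMaximal (F M : Type*) [Field F] [AddCommMonoid M]
    {hM : ∀ a b : M, a + b = 0 → a = 0 ∧ b = 0} : (augIdeal F M hM).IsMaximal :=
  RingHom.ker_isMaximal_of_surjective _ (fun c =>
    ⟨AddMonoidAlgebra.single 0 c, by simp [constantTermHom]⟩)

/-- The set `M = ([0, 5 + i/2] ∩ ℚ) ∪ (5 + i/2, ∞)` of nonnegative reals. -/
def Mcarrier (i : ℝ) : Set ℝ :=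
  (Set.Icc (0 : ℝ) (5 + i / 2) ∩ Set.range ((↑) : ℚ → ℝ)) ∪ Set.Ioi (5 + i / 2)

theorem Mcarrier.nonneg {i : ℝ} (hi0 : 0 < i) {x : ℝ} (hx : x ∈ Mcarrier i) : 0 ≤ x := by
  rcases hx with ⟨⟨h1, _⟩, _⟩ | h
  · exact h1
  · have : (0 : ℝ) < 5 + i / 2 := by linarith
    exact le_of_lt (lt_trans this h)

theorem Mcarrier.add_mem {i : ℝ} (hi0 : 0 < i) {a b : ℝ}
    (ha : a ∈ Mcarrier i) (hb : b ∈ Mcarrier i) : a + b ∈ Mcarrier i := by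
  rcases ha with ⟨⟨ha1, ha2⟩, ⟨p, hp⟩⟩ | ha
  · rcases hb with ⟨⟨hb1, hb2⟩, ⟨s, hs⟩⟩ | hb
    · rcases lt_or_ge (5 + i / 2) (a + b) with h | h
      · exact Or.inr h
      · exact Or.inl ⟨⟨by linarith, h⟩, ⟨p + s, by push_cast [hp, hs]; ring⟩⟩
    · exact Or.inr (by simp only [Set.mem_Ioi] at hb ⊢; linarith)
  · have hb0 : 0 ≤ b := Mcarrier.nonneg hi0 hb
    exact Or.inr (by simp only [Set.mem_Ioi] at ha ⊢; linarith)

/-- `M` as an additive submonoid of the reals. -/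
def Msubmonoid (i : ℝ) (hi0 : 0 < i) : AddSubmonoid ℝ where
  carrier := Mcarrier i
  zero_mem' := Or.inl ⟨⟨le_refl 0, by linarith⟩, ⟨0, by norm_num⟩⟩
  add_mem' := fun ha hb => Mcarrier.add_mem hi0 ha hb

theorem Msubmonoid_pos_monoid (i : ℝ) (hi0 : 0 < i) :
    ∀ a b : Msubmonoid i hi0, a + b = 0 → a = 0 ∧ b = 0 := fun a b h => by
  have hs : (a : ℝ) + (b : ℝ) = 0 := by
    have := congrArg Subtype.val h
    push_cast at this
    exact this
  have ha := Mcarrier.nonneg hi0 a.2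
  have hb := Mcarrier.nonneg hi0 b.2
  refine ⟨Subtype.ext ?_, Subtype.ext ?_⟩ <;>
    simp only [ZeroMemClass.coe_zero] <;> linarith

theorem aux_mul_apply_min {i : ℝ} {hi0 : 0 < i} {F : Type*} [Field F]
    (f g : AddMonoidAlgebra F (Msubmonoid i hi0))
    (hf : f.coeff.support.Nonempty) (hg : g.coeff.support.Nonempty) :
    (f * g).coeff (f.coeff.support.min' hf + g.coeff.support.min' hg)
      = f.coeff (f.coeff.support.min' hf) * g.coeff (g.coeff.support.min' hg) := by
  simp only [AddMonoidAlgebra.coeff_mul]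
  set μf := f.coeff.support.min' hf with hμf
  set μg := g.coeff.support.min' hg with hμg
  rw [Finsupp.sum, Finset.sum_eq_single μf]
  · rw [Finsupp.sum, Finset.sum_eq_single μg]
    · rw [if_pos rfl]
    · intro b hb hne
      rw [if_neg]
      intro h
      have h' : (μf : ℝ) + (b : ℝ) = (μf : ℝ) + (μg : ℝ) := by
        have := congrArg Subtype.val h; push_cast at this; exact this
      exact hne (Subtype.ext (by linarith))
    · intro h; exact absurd (Finset.min'_mem _ hg) h
  · intro a ha hne
    apply Finset.sum_eq_zero
    intro b hb
    dsimp only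
    rw [if_neg]
    intro h
    have h' : (a : ℝ) + (b : ℝ) = (μf : ℝ) + (μg : ℝ) := by
      have := congrArg Subtype.val h; push_cast at this; exact this
    have h1 : (μf : ℝ) ≤ a := Subtype.coe_le_coe.2 (Finset.min'_le _ _ ha)
    have h2 : (μg : ℝ) ≤ b := Subtype.coe_le_coe.2 (Finset.min'_le _ _ hb)
    have h3 : (a : ℝ) ≠ (μf : ℝ) := fun hc => hne (Subtype.ext hc)
    linarith [lt_of_le_of_ne h1 (Ne.symm h3)]
  · intro h; exact absurd (Finset.min'_mem _ hf) h

/-- Let `i` be an irrational real with `0 < i < 1`, let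
`M = ([0, 5 + i/2] ∩ ℚ) ∪ (5 + i/2, ∞)` as an additive submonoid of the nonnegative
reals, let `F` be a field, `R = F[X; M]` the monoid ring, `m` its maximal ideal of
elements with zero constant term, and `D = R_m`. Then the maximal ideal `mR_m` of `D` is
not finitely generated; in particular `D` does not satisfy the MIP condition. -/
theorem localization_monoidAlgebra_M_not_mip (i : ℝ) (hi : Irrational i) (hi0 : 0 < i)
    (hi1 : i < 1) (F : Type*) [Field F] :
    ¬(Ideal.map (algebraMap (AddMonoidAlgebra F (Msubmonoid i hi0))
        (Localization.AtPrime (augIdeal F (Msubmonoid i hi0) (Msubmonoid_pos_monoid i hi0))))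
        (augIdeal F (Msubmonoid i hi0) (Msubmonoid_pos_monoid i hi0))).FG ∧
    ¬(∀ I : Ideal (Localization.AtPrime
        (augIdeal F (Msubmonoid i hi0) (Msubmonoid_pos_monoid i hi0))),
        I.IsMaximal → I.IsPrincipal) := by
  set m := augIdeal F (Msubmonoid i hi0) (Msubmonoid_pos_monoid i hi0) with hm
  suffices hfg : ¬(Ideal.map (algebraMap (AddMonoidAlgebra F (Msubmonoid i hi0))
      (Localization.AtPrime m)) m).FG by
    refine ⟨hfg, fun hall => hfg ?_⟩
    have hmax : (Ideal.map (algebraMap (AddMonoidAlgebra F (Msubmonoid i hi0))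
        (Localization.AtPrime m)) m).IsMaximal := by
      rw [Localization.AtPrime.map_eq_maximalIdeal]
      exact IsLocalRing.maximalIdeal.isMaximal _
    obtain ⟨a, ha⟩ := (hall _ hmax)
    exact ⟨{a}, by rw [Finset.coe_singleton]; exact ha.symm⟩
  rintro ⟨T, hT⟩
  classical
  -- prime complement consists of nonzerodivisors
  have hcomp : m.primeCompl ≤ nonZeroDivisors (AddMonoidAlgebra F (Msubmonoid i hi0)) := by
    intro s hs
    rw [mem_nonZeroDivisors_iff_right]
    intro x hx
    by_contra hx0
    have hsne : s ≠ 0 := fun h => hs (by rw [h]; exact m.zero_mem)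
    have hxs := aux_mul_apply_min x s (Finsupp.support_nonempty_iff.2 (by simpa using hx0))
      (Finsupp.support_nonempty_iff.2 (by simpa using hsne))
    rw [hx] at hxs
    exact mul_ne_zero (Finsupp.mem_support_iff.1 (Finset.min'_mem _ _))
      (Finsupp.mem_support_iff.1 (Finset.min'_mem _ _)) hxs.symm
  have hinj : Function.Injective (algebraMap (AddMonoidAlgebra F (Msubmonoid i hi0))
      (Localization.AtPrime m)) := IsLocalization.injective _ hcomp
  have hne_top : Ideal.map (algebraMap (AddMonoidAlgebra F (Msubmonoid i hi0))
      (Localization.AtPrime m)) m ≠ ⊤ := by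
    rw [Localization.AtPrime.map_eq_maximalIdeal]
    exact (IsLocalRing.maximalIdeal.isMaximal _).ne_top
  choose r s hrs using fun t : Localization.AtPrime m =>
    IsLocalization.exists_mk'_eq m.primeCompl t
  have hspec : ∀ t : Localization.AtPrime m,
      t * algebraMap _ _ ((s t : AddMonoidAlgebra F (Msubmonoid i hi0)))
        = algebraMap _ _ (r t) := fun t => by
    have h := IsLocalization.mk'_spec (Localization.AtPrime m) (r t) (s t)
    rw [hrs t] at h
    exact h
  have hr_mem : ∀ t ∈ T, r t ∈ m := by
    intro t ht
    by_contra hrt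
    have hunit : IsUnit (algebraMap (AddMonoidAlgebra F (Msubmonoid i hi0))
        (Localization.AtPrime m) (r t)) :=
      (IsLocalization.AtPrime.isUnit_to_map_iff (Localization.AtPrime m) m (r t)).2 hrt
    have hmem : algebraMap (AddMonoidAlgebra F (Msubmonoid i hi0))
        (Localization.AtPrime m) (r t) ∈ Ideal.map (algebraMap _ _) m := by
      rw [← hT, ← hspec t]
      exact Ideal.mul_mem_right _ _ (Ideal.subset_span ht)
    exact hne_top (Ideal.eq_top_of_isUnit_mem _ hmem hunit)
  -- the minimal degree function and the lower bound δ
  set ν : AddMonoidAlgebra F (Msubmonoid i hi0) → ℝ := fun p =>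
    if hp : p.coeff.support.Nonempty then ((p.coeff.support.min' hp : Msubmonoid i hi0) : ℝ) else 1 with hν
  set V : Finset ℝ := insert 1 (T.image fun t => ν (r t)) with hV
  have hVpos : ∀ x ∈ V, 0 < x := by
    intro x hx
    rw [hV, Finset.mem_insert] at hx
    rcases hx with rfl | hx
    · norm_num
    · obtain ⟨t, ht, rfl⟩ := Finset.mem_image.1 hx
      rw [hν]
      dsimp only
      split
      · next hp =>
        have hmem := Finset.min'_mem _ hp
        have h0 : ((r t).coeff.support.min' hp) ≠ 0 := by
          intro h
          have hne := Finsupp.mem_support_iff.1 hmem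
          rw [h] at hne
          exact hne ((mem_augIdeal_iff _ _ _ _).1 (hr_mem t ht))
        have hnn : (0:ℝ) ≤ (((r t).coeff.support.min' hp : Msubmonoid i hi0) : ℝ) :=
          Mcarrier.nonneg hi0 (Subtype.mem _)
        exact lt_of_le_of_ne hnn (fun h => h0 (Subtype.ext h.symm))
      · norm_num
  have hVne : V.Nonempty := ⟨1, Finset.mem_insert_self _ _⟩
  set δ := V.min' hVne with hδ
  have hδpos : 0 < δ := hVpos _ (Finset.min'_mem _ _)
  have hδle : ∀ t ∈ T, δ ≤ ν (r t) := fun t ht =>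
    Finset.min'_le _ _ (Finset.mem_insert_of_mem (Finset.mem_image_of_mem _ ht))
  -- the ideal of elements all of whose exponents are at least δ
  set Iδ : Ideal (AddMonoidAlgebra F (Msubmonoid i hi0)) :=
    { carrier := {p | ∀ x ∈ p.coeff.support, δ ≤ ((x : Msubmonoid i hi0) : ℝ)}
      add_mem' := fun {a b} ha hb x hx => by
        rcases Finset.mem_union.1 (Finsupp.support_add hx) with h | h
        · exact ha x h
        · exact hb x h
      zero_mem' := fun x hx => by simp at hx
      smul_mem' := fun c p hp x hx => by
        rw [smul_eq_mul] at hx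
        obtain ⟨a, ha, b, hb, rfl⟩ := Finset.mem_add.1 (AddMonoidAlgebra.support_coeff_mul_subset c p hx)
        have h1 : (0:ℝ) ≤ (a : ℝ) := Mcarrier.nonneg hi0 a.2
        have h2 := hp b hb
        push_cast
        linarith } with hIδ
  have hJ : ∀ t ∈ T, r t ∈ Iδ := by
    intro t ht x hx
    have hp : (r t).coeff.support.Nonempty := ⟨x, hx⟩
    have hle := hδle t ht
    rw [hν] at hle
    dsimp only at hle
    rw [dif_pos hp] at hle
    exact le_trans hle (Subtype.coe_le_coe.2 (Finset.min'_le _ _ hx))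
  have hsub : Ideal.span (T : Set (Localization.AtPrime m)) ≤
      Ideal.map (algebraMap _ _) Iδ := by
    rw [Ideal.span_le]
    intro t ht
    obtain ⟨u, hu⟩ := IsLocalization.map_units (Localization.AtPrime m) (s t)
    have heq : t = algebraMap _ _ (r t) * ↑u⁻¹ := by
      rw [Units.eq_mul_inv_iff_mul_eq, hu]
      exact hspec t
    rw [heq]
    exact Ideal.mul_mem_right _ _ (Ideal.mem_map_of_mem _ (hJ t ht))
  -- the small rational exponent
  obtain ⟨q, hq1, hq2⟩ := exists_rat_btwn (lt_min hδpos one_pos)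
  have hq0 : (0:ℝ) < q := hq1
  have hqδ : (q:ℝ) < δ := lt_of_lt_of_le hq2 (min_le_left _ _)
  have hqi : (q:ℝ) < 1 := lt_of_lt_of_le hq2 (min_le_right _ _)
  have hqM : (q:ℝ) ∈ Msubmonoid i hi0 := Or.inl ⟨⟨le_of_lt hq0, by linarith⟩, ⟨q, rfl⟩⟩
  set qM : Msubmonoid i hi0 := ⟨(q:ℝ), hqM⟩ with hqMdef
  have hqM0 : qM ≠ 0 := by
    intro h
    have hc := congrArg Subtype.val h
    rw [hqMdef] at hc
    simp only [ZeroMemClass.coe_zero] at hc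
    linarith
  set g : AddMonoidAlgebra F (Msubmonoid i hi0) := AddMonoidAlgebra.single qM 1 with hg
  have hg0 : g ≠ 0 := fun h => one_ne_zero (AddMonoidAlgebra.single_eq_zero.1 h)
  have hgm : g ∈ m := by
    rw [mem_augIdeal_iff]
    exact Finsupp.single_eq_of_ne' hqM0
  have hφg : algebraMap (AddMonoidAlgebra F (Msubmonoid i hi0))
      (Localization.AtPrime m) g ∈ Ideal.map (algebraMap _ _) Iδ :=
    hsub (by rw [hT]; exact Ideal.mem_map_of_mem _ hgm)
  obtain ⟨⟨a, s'⟩, ha⟩ := (IsLocalization.mem_map_algebraMap_iff m.primeCompl _).1 hφg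
  have hgs : g * (s' : AddMonoidAlgebra F (Msubmonoid i hi0)) = a :=
    hinj (by rw [map_mul]; exact ha)
  have hmem0 : g * (s' : AddMonoidAlgebra F (Msubmonoid i hi0)) ∈ Iδ := by
    rw [hgs]; exact a.2
  have hmem : ∀ x ∈ (g * (s' : AddMonoidAlgebra F (Msubmonoid i hi0))).coeff.support,
      δ ≤ ((x : Msubmonoid i hi0) : ℝ) := hmem0
  have hs'm : (s' : AddMonoidAlgebra F (Msubmonoid i hi0)) ∉ m := s'.2
  have hs'0 : (s' : AddMonoidAlgebra F (Msubmonoid i hi0)) ≠ 0 :=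
    fun h => hs'm (by rw [h]; exact m.zero_mem)
  have hgsup : g.coeff.support = {qM} := Finsupp.support_single_ne_zero _ one_ne_zero
  have hgne : g.coeff.support.Nonempty := ⟨qM, by rw [hgsup]; exact Finset.mem_singleton_self _⟩
  have hs'ne : (s' : AddMonoidAlgebra F (Msubmonoid i hi0)).coeff.support.Nonempty :=
    Finsupp.support_nonempty_iff.2 (by simpa using hs'0)
  have hkey := aux_mul_apply_min g (s' : AddMonoidAlgebra F (Msubmonoid i hi0)) hgne hs'ne
  have hμg : g.coeff.support.min' hgne = qM := le_antisymm
    (Finset.min'_le _ _ (by rw [hgsup]; exact Finset.mem_singleton_self _))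
    (Finset.le_min' _ _ _ (fun y hy => by
      rw [hgsup, Finset.mem_singleton] at hy
      exact le_of_eq hy.symm))
  have hc0 : (s' : AddMonoidAlgebra F (Msubmonoid i hi0)).coeff 0 ≠ 0 :=
    fun h => hs'm ((mem_augIdeal_iff _ _ _ _).2 h)
  have h0mem : (0 : Msubmonoid i hi0) ∈
      (s' : AddMonoidAlgebra F (Msubmonoid i hi0)).coeff.support := Finsupp.mem_support_iff.2 hc0
  have hμs : (((s' : AddMonoidAlgebra F (Msubmonoid i hi0)).coeff.support.min' hs'ne :
      Msubmonoid i hi0) : ℝ) ≤ 0 := by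
    have hle := Finset.min'_le _ _ h0mem
    have := Subtype.coe_le_coe.2 hle
    simpa using this
  have hgq : g.coeff qM = 1 := by rw [hg]; exact Finsupp.single_eq_same
  have hcoeff : (g * (s' : AddMonoidAlgebra F (Msubmonoid i hi0))).coeff
      (g.coeff.support.min' hgne + (s' : AddMonoidAlgebra F (Msubmonoid i hi0)).coeff.support.min' hs'ne)
        ≠ 0 := by
    rw [hkey, hμg, hgq, one_mul]
    exact Finsupp.mem_support_iff.1 (Finset.min'_mem _ _)
  have hsupmem := Finsupp.mem_support_iff.2 hcoeff
  have hfinal := hmem _ hsupmem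
  rw [hμg] at hfinal
  push_cast at hfinal
  linarith
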